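/- Let s > d/2 and 0 ≤ r ≤ s. There exists c = c(r,s,d) > 0 such that ‖fg‖_{H^r(ℝ^d)} ≤ c‖f‖_{H^s(ℝ^d)}‖g‖_{H^r(ℝ^d)} for all f ∈ H^s(ℝ^d) and g ∈ H^r(ℝ^d). -/

import Mathlib

open MeasureTheory
open scoped ENNReal NNReal

private lemma real_weight_key {s r A B T : ℝ} (hr0 : 0 ≤ r) (hrs : r ≤ s)
    (hA : 1 ≤ A) (hB : 1 ≤ B) (hT : 0 ≤ T)
    (hT1 : B ≤ A → T ≤ 4 * A) (hT2 : A ≤ B → T ≤ 4 * B) :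
    T ^ (r/2) ≤ 2 ^ r * (A ^ (s/2) * B ^ (r/2) * (A ^ (-(s/2)) + B ^ (-(s/2)))) := by
  have hA0 : (0:ℝ) < A := lt_of_lt_of_le one_pos hA
  have hB0 : (0:ℝ) < B := lt_of_lt_of_le one_pos hB
  have h4 : ((4:ℝ)) ^ (r/2) = 2 ^ r := by
    rw [show (4:ℝ) = (2:ℝ) ^ (2:ℕ) by norm_num, ← Real.rpow_natCast (2:ℝ) 2,
      ← Real.rpow_mul (by norm_num)]
    congr 1; ring
  rcases le_total A B with h | h
  · have hT4 : T ≤ 4 * B := hT2 h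
    have h1 : T ^ (r/2) ≤ (4*B) ^ (r/2) := Real.rpow_le_rpow hT hT4 (by linarith)
    have h2 : (4*B : ℝ) ^ (r/2) = 2^r * B^(r/2) := by
      rw [Real.mul_rpow (by norm_num) hB0.le, h4]
    have h3 : (2:ℝ)^r * B^(r/2) = 2^r * (A^(s/2) * B^(r/2) * A^(-(s/2))) := by
      rw [show A^(s/2) * B^(r/2) * A^(-(s/2)) = A^(s/2) * A^(-(s/2)) * B^(r/2) by ring,
        ← Real.rpow_add hA0]
      norm_num
    refine (h1.trans_eq (h2.trans h3)).trans ?_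
    gcongr
    exact le_add_of_nonneg_right (by positivity)
  · have hT4 : T ≤ 4 * A := hT1 h
    have h1 : T ^ (r/2) ≤ (4*A) ^ (r/2) := Real.rpow_le_rpow hT hT4 (by linarith)
    have h2 : (4*A : ℝ) ^ (r/2) = 2^r * A^(r/2) := by
      rw [Real.mul_rpow (by norm_num) hA0.le, h4]
    have h3 : A^(r/2) = A^(s/2) * A^((r-s)/2) := by
      rw [← Real.rpow_add hA0]; ring_nf
    have h5 : A^((r-s)/2) ≤ B^((r-s)/2) :=
      Real.rpow_le_rpow_of_nonpos hB0 h (by linarith)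
    have h6 : B^((r-s)/2) = B^(r/2) * B^(-(s/2)) := by
      rw [← Real.rpow_add hB0]; ring_nf
    have h7 : A^(r/2) ≤ A^(s/2) * B^(r/2) * B^(-(s/2)) := by
      rw [h3]
      calc A^(s/2) * A^((r-s)/2) ≤ A^(s/2) * B^((r-s)/2) := by
            gcongr
        _ = A^(s/2) * B^(r/2) * B^(-(s/2)) := by rw [h6]; ring
    refine (h1.trans_eq h2).trans ?_
    have : (2:ℝ)^r * A^(r/2) ≤ 2^r * (A^(s/2) * B^(r/2) * B^(-(s/2))) := by
      gcongr
    refine this.trans ?_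
    gcongr
    exact le_add_of_nonneg_left (by positivity)

private lemma C_finite (d : ℕ) {s : ℝ} (hs : (d:ℝ)/2 < s) :
    (∫⁻ y : EuclideanSpace ℝ (Fin d), ENNReal.ofReal ((1 + ‖y‖^2)^(-s))) < ⊤ := by
  have hs0 : (0:ℝ) < s := lt_of_le_of_lt (by positivity) hs
  have hb : ∀ y : EuclideanSpace ℝ (Fin d),
      (1 + ‖y‖^2 : ℝ)^(-s) ≤ 2^s * (1 + ‖y‖)^(-(2*s)) := by
    intro y
    have := rpow_neg_one_add_norm_sq_le y (show (0:ℝ) < 2*s by linarith)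
    rw [show -(2*s)/2 = -s by ring, show (2*s)/2 = s by ring] at this
    exact this
  calc (∫⁻ y : EuclideanSpace ℝ (Fin d), ENNReal.ofReal ((1 + ‖y‖^2)^(-s)))
      ≤ ∫⁻ y : EuclideanSpace ℝ (Fin d),
          ENNReal.ofReal (2^s) * ENNReal.ofReal ((1 + ‖y‖)^(-(2*s))) := by
        refine lintegral_mono fun y => ?_
        rw [← ENNReal.ofReal_mul (by positivity)]
        exact ENNReal.ofReal_le_ofReal (hb y)
    _ = ENNReal.ofReal (2^s) *
          ∫⁻ y : EuclideanSpace ℝ (Fin d), ENNReal.ofReal ((1 + ‖y‖)^(-(2*s))) :=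
        lintegral_const_mul' _ _ ENNReal.ofReal_ne_top
    _ < ⊤ := by
        refine ENNReal.mul_lt_top ENNReal.ofReal_lt_top ?_
        refine finite_integral_one_add_norm ?_
        rw [finrank_euclideanSpace_fin]
        linarith

private noncomputable def Wt (d : ℕ) (t : ℝ) (y : EuclideanSpace ℝ (Fin d)) : ℝ≥0∞ :=
  ENNReal.ofReal ((1 + ‖y‖ ^ 2) ^ t)

private lemma Wt_meas (d : ℕ) (t : ℝ) : Measurable (Wt d t) := by
  have hcont : Continuous fun y : EuclideanSpace ℝ (Fin d) => (1 + ‖y‖ ^ 2 : ℝ) := by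
    continuity
  exact (ENNReal.continuous_ofReal.comp
    (hcont.rpow_const fun x => Or.inl (by positivity))).measurable

private lemma Wt_ne_top (d : ℕ) (t : ℝ) (y : EuclideanSpace ℝ (Fin d)) : Wt d t y ≠ ⊤ :=
  ENNReal.ofReal_ne_top

private lemma Wt_sq (d : ℕ) (t : ℝ) (y : EuclideanSpace ℝ (Fin d)) :
    Wt d t y ^ 2 = Wt d (2 * t) y := by
  unfold Wt
  rw [← ENNReal.ofReal_pow (by positivity), ← Real.rpow_natCast ((1 + ‖y‖ ^ 2) ^ t) 2,
    ← Real.rpow_mul (by positivity)]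
  norm_num [mul_comm]

private lemma key_pointwise (d : ℕ) {s r : ℝ} (hr0 : 0 ≤ r) (hrs : r ≤ s)
    (F G : EuclideanSpace ℝ (Fin d) → ℂ) (ξ z : EuclideanSpace ℝ (Fin d)) :
    Wt d (r/2) ξ * ((‖F z‖₊ : ℝ≥0∞) * (‖G (ξ - z)‖₊ : ℝ≥0∞))
      ≤ ENNReal.ofReal (2 ^ r) *
          ((Wt d (s/2) z * ‖F z‖₊) * (Wt d (r/2) (ξ - z) * ‖G (ξ - z)‖₊) *
            (Wt d (-(s/2)) z + Wt d (-(s/2)) (ξ - z))) := by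
  have htri : ‖ξ‖ ≤ ‖z‖ + ‖ξ - z‖ := by
    have h := norm_add_le z (ξ - z)
    rwa [add_sub_cancel] at h
  have hnz : (0:ℝ) ≤ ‖z‖ := norm_nonneg _
  have hnw : (0:ℝ) ≤ ‖ξ - z‖ := norm_nonneg _
  have hnξ : (0:ℝ) ≤ ‖ξ‖ := norm_nonneg _
  have hw := real_weight_key (s := s) (A := 1 + ‖z‖ ^ 2) (B := 1 + ‖ξ - z‖ ^ 2)
    (T := 1 + ‖ξ‖ ^ 2) hr0 hrs (by nlinarith [sq_nonneg ‖z‖]) (by nlinarith [sq_nonneg ‖ξ - z‖])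
    (by positivity)
    (fun h => by
      nlinarith [htri, hnξ, hnz, hnw, sq_nonneg (‖z‖ - ‖ξ - z‖),
        mul_le_mul htri htri hnξ (show (0:ℝ) ≤ ‖z‖ + ‖ξ - z‖ by linarith)])
    (fun h => by
      nlinarith [htri, hnξ, hnz, hnw, sq_nonneg (‖z‖ - ‖ξ - z‖),
        mul_le_mul htri htri hnξ (show (0:ℝ) ≤ ‖z‖ + ‖ξ - z‖ by linarith)])
  have hofr : Wt d (r/2) ξ
      ≤ ENNReal.ofReal (2 ^ r) * (Wt d (s/2) z * Wt d (r/2) (ξ - z) *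
          (Wt d (-(s/2)) z + Wt d (-(s/2)) (ξ - z))) := by
    unfold Wt
    rw [← ENNReal.ofReal_add (by positivity) (by positivity),
      ← ENNReal.ofReal_mul (by positivity), ← ENNReal.ofReal_mul (by positivity),
      ← ENNReal.ofReal_mul (by positivity)]
    exact ENNReal.ofReal_le_ofReal hw
  calc Wt d (r/2) ξ * ((‖F z‖₊ : ℝ≥0∞) * (‖G (ξ - z)‖₊ : ℝ≥0∞))
      ≤ (ENNReal.ofReal (2 ^ r) * (Wt d (s/2) z * Wt d (r/2) (ξ - z) *
          (Wt d (-(s/2)) z + Wt d (-(s/2)) (ξ - z)))) *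
          ((‖F z‖₊ : ℝ≥0∞) * (‖G (ξ - z)‖₊ : ℝ≥0∞)) := mul_le_mul_left hofr _
    _ = ENNReal.ofReal (2 ^ r) *
          ((Wt d (s/2) z * ‖F z‖₊) * (Wt d (r/2) (ξ - z) * ‖G (ξ - z)‖₊) *
            (Wt d (-(s/2)) z + Wt d (-(s/2)) (ξ - z))) := by ring

private lemma stmt15_meas (d : ℕ) (s r : ℝ) (hs : (d : ℝ) / 2 < s)
    (hr0 : 0 ≤ r) (hrs : r ≤ s) :
    ∃ c : ℝ, 0 < c ∧
      ∀ F G : EuclideanSpace ℝ (Fin d) → ℂ, Measurable F → Measurable G →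
        (∫⁻ ξ, ENNReal.ofReal ((1 + ‖ξ‖ ^ 2) ^ r) *
            (‖∫ z, F z * G (ξ - z)‖₊ : ℝ≥0∞) ^ 2)
          ≤ ENNReal.ofReal (c ^ 2) *
              (∫⁻ ξ, ENNReal.ofReal ((1 + ‖ξ‖ ^ 2) ^ s) * (‖F ξ‖₊ : ℝ≥0∞) ^ 2) *
              (∫⁻ ξ, ENNReal.ofReal ((1 + ‖ξ‖ ^ 2) ^ r) * (‖G ξ‖₊ : ℝ≥0∞) ^ 2) := by
  have hs0 : (0:ℝ) < s := lt_of_le_of_lt (by positivity) hs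
  set C : ℝ≥0∞ := ∫⁻ y : EuclideanSpace ℝ (Fin d), Wt d (-(s/2)) y ^ 2 with hCdef
  have hCeq : C = ∫⁻ y : EuclideanSpace ℝ (Fin d), ENNReal.ofReal ((1 + ‖y‖^2)^(-s)) := by
    rw [hCdef]
    congr 1
    funext y
    rw [Wt_sq, show 2 * (-(s/2)) = -s by ring]
    rfl
  have hCfin : C < ⊤ := by rw [hCeq]; exact C_finite d hs
  set c : ℝ := Real.sqrt ((4:ℝ)^r * 4 * (C.toReal + 1)) with hcdef
  have hcsq : c ^ 2 = (4:ℝ)^r * 4 * (C.toReal + 1) := Real.sq_sqrt (by positivity)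
  refine ⟨c, Real.sqrt_pos.mpr (by positivity), ?_⟩
  intro F G hFm hGm
  set Φ : EuclideanSpace ℝ (Fin d) → ℝ≥0∞ :=
    fun z => Wt d (s/2) z * ‖F z‖₊ with hΦdef
  set Ψ : EuclideanSpace ℝ (Fin d) → ℝ≥0∞ :=
    fun y => Wt d (r/2) y * ‖G y‖₊ with hΨdef
  set U : EuclideanSpace ℝ (Fin d) → ℝ≥0∞ := Wt d (-(s/2)) with hUdef
  have hΦm : Measurable Φ := (Wt_meas d _).mul hFm.enorm
  have hΨm : Measurable Ψ := (Wt_meas d _).mul hGm.enorm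
  have hUm : Measurable U := Wt_meas d _
  have h22 : Real.HolderConjugate 2 2 := Real.HolderConjugate.two_two
  set J : EuclideanSpace ℝ (Fin d) → ℝ≥0∞ :=
    fun ξ => ∫⁻ z, Φ z ^ 2 * Ψ (ξ - z) ^ 2 with hJdef
  have sqrt_sq : ∀ x : ℝ≥0∞, (x ^ (1/2 : ℝ)) ^ 2 = x := by
    intro x
    rw [sq, ← ENNReal.rpow_add_of_nonneg _ _ (by norm_num) (by norm_num)]
    norm_num
  -- per-ξ estimate
  have main : ∀ ξ, ENNReal.ofReal ((1 + ‖ξ‖ ^ 2) ^ r) *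
      (‖∫ z, F z * G (ξ - z)‖₊ : ℝ≥0∞) ^ 2
      ≤ (ENNReal.ofReal ((4:ℝ)^r * 4) * C) * J ξ := by
    intro ξ
    have csfun : ∀ u : EuclideanSpace ℝ (Fin d) → ℝ≥0∞, Measurable u →
        (∫⁻ z, u z ^ 2) = C →
        (∫⁻ z, u z * (Φ z * Ψ (ξ - z))) ≤ C ^ (1/2:ℝ) * J ξ ^ (1/2:ℝ) := by
      intro u hum hu2
      have hg : Measurable fun z => Φ z * Ψ (ξ - z) :=
        hΦm.mul (hΨm.comp (measurable_const.sub measurable_id))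
      have hcs := ENNReal.lintegral_mul_le_Lp_mul_Lq volume h22 hum.aemeasurable
        hg.aemeasurable
      simp only [Pi.mul_apply, ENNReal.rpow_two] at hcs
      rw [hu2] at hcs
      refine hcs.trans (le_of_eq ?_)
      congr 2
      exact lintegral_congr fun a => mul_pow (Φ a) (Ψ (ξ - a)) 2
    have cs1 : (∫⁻ z, U z * (Φ z * Ψ (ξ - z))) ≤ C ^ (1/2:ℝ) * J ξ ^ (1/2:ℝ) :=
      csfun U hUm hCdef.symm
    have cs2 : (∫⁻ z, U (ξ - z) * (Φ z * Ψ (ξ - z))) ≤ C ^ (1/2:ℝ) * J ξ ^ (1/2:ℝ) := by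
      refine csfun (fun z => U (ξ - z)) (hUm.comp (measurable_const.sub measurable_id)) ?_
      rw [hCdef]
      exact (Measure.measurePreserving_sub_left volume ξ).lintegral_comp (hUm.pow_const 2)
    have h1 : (‖∫ z, F z * G (ξ - z)‖₊ : ℝ≥0∞)
        ≤ ∫⁻ z, (‖F z‖₊ : ℝ≥0∞) * ‖G (ξ - z)‖₊ := by
      refine (enorm_integral_le_lintegral_enorm _).trans (le_of_eq ?_)
      congr 1
      funext z
      rw [enorm_mul]; rfl
    have hWsplit : ENNReal.ofReal ((1 + ‖ξ‖ ^ 2) ^ r) = Wt d (r/2) ξ * Wt d (r/2) ξ := by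
      rw [← sq, Wt_sq, show 2 * (r/2) = r by ring]
      rfl
    have h2 : ENNReal.ofReal ((1 + ‖ξ‖ ^ 2) ^ r) *
        (‖∫ z, F z * G (ξ - z)‖₊ : ℝ≥0∞) ^ 2
        ≤ (∫⁻ z, Wt d (r/2) ξ * ((‖F z‖₊ : ℝ≥0∞) * ‖G (ξ - z)‖₊)) ^ 2 := by
      rw [lintegral_const_mul' _ _ (Wt_ne_top d _ ξ), hWsplit]
      calc Wt d (r/2) ξ * Wt d (r/2) ξ * (‖∫ z, F z * G (ξ - z)‖₊ : ℝ≥0∞) ^ 2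
          = (Wt d (r/2) ξ * (‖∫ z, F z * G (ξ - z)‖₊ : ℝ≥0∞)) ^ 2 := by ring
        _ ≤ (Wt d (r/2) ξ * ∫⁻ z, (‖F z‖₊ : ℝ≥0∞) * ‖G (ξ - z)‖₊) ^ 2 :=
            pow_le_pow_left' (mul_le_mul_right h1 _) 2
    have h3 : (∫⁻ z, Wt d (r/2) ξ * ((‖F z‖₊ : ℝ≥0∞) * ‖G (ξ - z)‖₊))
        ≤ ENNReal.ofReal (2^r) *
            ((∫⁻ z, U z * (Φ z * Ψ (ξ - z))) + ∫⁻ z, U (ξ - z) * (Φ z * Ψ (ξ - z))) := by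
      refine (lintegral_mono (fun z => key_pointwise d hr0 hrs F G ξ z)).trans
        (le_of_eq ?_)
      rw [lintegral_const_mul' _ _ ENNReal.ofReal_ne_top]
      congr 1
      rw [← lintegral_add_left (show Measurable fun z => U z * (Φ z * Ψ (ξ - z)) from
        hUm.mul (hΦm.mul (hΨm.comp (measurable_const.sub measurable_id))))]
      refine lintegral_congr fun z => ?_
      simp only [hΦdef, hΨdef, hUdef]
      ring
    have h4 : (∫⁻ z, Wt d (r/2) ξ * ((‖F z‖₊ : ℝ≥0∞) * ‖G (ξ - z)‖₊))
        ≤ ENNReal.ofReal (2^r) * (2 * (C ^ (1/2:ℝ) * J ξ ^ (1/2:ℝ))) := by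
      refine h3.trans ?_
      rw [two_mul]
      exact mul_le_mul_right (add_le_add cs1 cs2) _
    calc ENNReal.ofReal ((1 + ‖ξ‖ ^ 2) ^ r) * (‖∫ z, F z * G (ξ - z)‖₊ : ℝ≥0∞) ^ 2
        ≤ (ENNReal.ofReal (2^r) * (2 * (C ^ (1/2:ℝ) * J ξ ^ (1/2:ℝ)))) ^ 2 :=
          h2.trans (pow_le_pow_left' h4 2)
      _ = ENNReal.ofReal ((4:ℝ)^r) * (4 * (C * J ξ)) := by
          rw [mul_pow, mul_pow, mul_pow, sqrt_sq C, sqrt_sq (J ξ)]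
          rw [show (ENNReal.ofReal ((2:ℝ)^r)) ^ 2 = ENNReal.ofReal ((4:ℝ)^r) by
            rw [sq, ← ENNReal.ofReal_mul (by positivity),
              ← Real.mul_rpow (by norm_num) (by norm_num)]
            norm_num]
          norm_num
      _ = (ENNReal.ofReal ((4:ℝ)^r * 4) * C) * J ξ := by
          rw [ENNReal.ofReal_mul (by positivity),
            show ENNReal.ofReal (4:ℝ) = 4 by norm_num]
          ring
  -- integrate
  have hswapmeas : AEMeasurable
      (Function.uncurry fun ξ z : EuclideanSpace ℝ (Fin d) => Φ z ^ 2 * Ψ (ξ - z) ^ 2)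
      ((volume : Measure (EuclideanSpace ℝ (Fin d))).prod volume) := by
    exact (((hΦm.comp measurable_snd).pow_const 2).mul
      ((hΨm.comp (measurable_fst.sub measurable_snd)).pow_const 2)).aemeasurable
  have hJint : (∫⁻ ξ, J ξ) = (∫⁻ z, Φ z ^ 2) * ∫⁻ y, Ψ y ^ 2 := by
    rw [hJdef]
    rw [lintegral_lintegral_swap hswapmeas]
    have inner : ∀ z : EuclideanSpace ℝ (Fin d),
        (∫⁻ ξ, Φ z ^ 2 * Ψ (ξ - z) ^ 2) = Φ z ^ 2 * ∫⁻ y, Ψ y ^ 2 := by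
      intro z
      rw [lintegral_const_mul' _ _ (ENNReal.pow_ne_top
        (ENNReal.mul_ne_top (Wt_ne_top d _ z) ENNReal.coe_ne_top))]
      congr 1
      exact (measurePreserving_sub_right volume z).lintegral_comp (hΨm.pow_const 2)
    simp_rw [inner]
    exact lintegral_mul_const _ (hΦm.pow_const 2)
  have hIF : (∫⁻ z, Φ z ^ 2)
      = ∫⁻ ξ, ENNReal.ofReal ((1 + ‖ξ‖ ^ 2) ^ s) * (‖F ξ‖₊ : ℝ≥0∞) ^ 2 := by
    congr 1
    funext z
    simp only [hΦdef]
    rw [mul_pow, Wt_sq, show 2 * (s/2) = s by ring]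
    rfl
  have hIG : (∫⁻ y, Ψ y ^ 2)
      = ∫⁻ ξ, ENNReal.ofReal ((1 + ‖ξ‖ ^ 2) ^ r) * (‖G ξ‖₊ : ℝ≥0∞) ^ 2 := by
    congr 1
    funext y
    simp only [hΨdef]
    rw [mul_pow, Wt_sq, show 2 * (r/2) = r by ring]
    rfl
  have hconst : ENNReal.ofReal ((4:ℝ)^r * 4) * C ≤ ENNReal.ofReal (c ^ 2) := by
    have hre : ENNReal.ofReal (c ^ 2)
        = ENNReal.ofReal ((4:ℝ)^r * 4) * ENNReal.ofReal (C.toReal + 1) := by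
      rw [hcsq, ENNReal.ofReal_mul (show (0:ℝ) ≤ (4:ℝ)^r * 4 by positivity)]
    rw [hre]
    refine mul_le_mul_right ?_ _
    calc C = ENNReal.ofReal C.toReal := (ENNReal.ofReal_toReal hCfin.ne).symm
      _ ≤ ENNReal.ofReal (C.toReal + 1) := ENNReal.ofReal_le_ofReal (by linarith)
  calc (∫⁻ ξ, ENNReal.ofReal ((1 + ‖ξ‖ ^ 2) ^ r) *
        (‖∫ z, F z * G (ξ - z)‖₊ : ℝ≥0∞) ^ 2)
      ≤ ∫⁻ ξ, (ENNReal.ofReal ((4:ℝ)^r * 4) * C) * J ξ := lintegral_mono main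
    _ = (ENNReal.ofReal ((4:ℝ)^r * 4) * C) * ∫⁻ ξ, J ξ :=
        lintegral_const_mul' _ _ (ENNReal.mul_ne_top ENNReal.ofReal_ne_top hCfin.ne)
    _ = (ENNReal.ofReal ((4:ℝ)^r * 4) * C) * ((∫⁻ z, Φ z ^ 2) * ∫⁻ y, Ψ y ^ 2) := by
        rw [hJint]
    _ ≤ ENNReal.ofReal (c ^ 2) * ((∫⁻ z, Φ z ^ 2) * ∫⁻ y, Ψ y ^ 2) :=
        mul_le_mul_left hconst _
    _ = ENNReal.ofReal (c ^ 2) *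
          (∫⁻ ξ, ENNReal.ofReal ((1 + ‖ξ‖ ^ 2) ^ s) * (‖F ξ‖₊ : ℝ≥0∞) ^ 2) *
          (∫⁻ ξ, ENNReal.ofReal ((1 + ‖ξ‖ ^ 2) ^ r) * (‖G ξ‖₊ : ℝ≥0∞) ^ 2) := by
        rw [hIF, hIG, mul_assoc]

/-- Fourier-side formulation; `F = f̂`, `G = ĝ`, and the Fourier
transform of the pointwise product `fg` is the convolution `F ∗ G`;
`‖f‖²_{H^t} = ∫ (1+|ξ|²)^t |f̂|²`.  For `s > d/2` and `0 ≤ r ≤ s` there is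
`c = c(r,s,d) > 0` with `‖fg‖_{H^r} ≤ c ‖f‖_{H^s} ‖g‖_{H^r}` for all `f ∈ H^s(ℝ^d)` and
`g ∈ H^r(ℝ^d)` (stated with squared norms). -/
theorem stmt_15 (d : ℕ) (hd : 0 < d) (s r : ℝ) (hs : (d : ℝ) / 2 < s)
    (hr0 : 0 ≤ r) (hrs : r ≤ s) :
    ∃ c : ℝ, 0 < c ∧
      ∀ F G : EuclideanSpace ℝ (Fin d) → ℂ, AEMeasurable F → AEMeasurable G →
        (∫⁻ ξ, ENNReal.ofReal ((1 + ‖ξ‖ ^ 2) ^ r) *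
            (‖∫ z, F z * G (ξ - z)‖₊ : ℝ≥0∞) ^ 2)
          ≤ ENNReal.ofReal (c ^ 2) *
              (∫⁻ ξ, ENNReal.ofReal ((1 + ‖ξ‖ ^ 2) ^ s) * (‖F ξ‖₊ : ℝ≥0∞) ^ 2) *
              (∫⁻ ξ, ENNReal.ofReal ((1 + ‖ξ‖ ^ 2) ^ r) * (‖G ξ‖₊ : ℝ≥0∞) ^ 2) := by
  obtain ⟨c, hc, hmain⟩ := stmt15_meas d s r hs hr0 hrs
  refine ⟨c, hc, ?_⟩
  intro F G hF hG
  have hFae : F =ᵐ[volume] hF.mk F := hF.ae_eq_mk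
  have hGae : G =ᵐ[volume] hG.mk G := hG.ae_eq_mk
  have key := hmain (hF.mk F) (hG.mk G) hF.measurable_mk hG.measurable_mk
  have e1 : (∫⁻ ξ, ENNReal.ofReal ((1 + ‖ξ‖ ^ 2) ^ r) *
        (‖∫ z, F z * G (ξ - z)‖₊ : ℝ≥0∞) ^ 2)
      = ∫⁻ ξ, ENNReal.ofReal ((1 + ‖ξ‖ ^ 2) ^ r) *
          (‖∫ z, hF.mk F z * hG.mk G (ξ - z)‖₊ : ℝ≥0∞) ^ 2 := by
    refine lintegral_congr fun ξ => ?_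
    have hGc : (fun z => G (ξ - z)) =ᵐ[volume] fun z => hG.mk G (ξ - z) :=
      (Measure.measurePreserving_sub_left volume ξ).quasiMeasurePreserving.ae_eq_comp hGae
    have hint : (∫ z, F z * G (ξ - z)) = ∫ z, hF.mk F z * hG.mk G (ξ - z) :=
      integral_congr_ae (hFae.mul hGc)
    rw [hint]
  have e2 : (∫⁻ ξ, ENNReal.ofReal ((1 + ‖ξ‖ ^ 2) ^ s) * (‖F ξ‖₊ : ℝ≥0∞) ^ 2)
      = ∫⁻ ξ, ENNReal.ofReal ((1 + ‖ξ‖ ^ 2) ^ s) * (‖hF.mk F ξ‖₊ : ℝ≥0∞) ^ 2 :=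
    lintegral_congr_ae (hFae.mono fun ξ h => by simp only [h])
  have e3 : (∫⁻ ξ, ENNReal.ofReal ((1 + ‖ξ‖ ^ 2) ^ r) * (‖G ξ‖₊ : ℝ≥0∞) ^ 2)
      = ∫⁻ ξ, ENNReal.ofReal ((1 + ‖ξ‖ ^ 2) ^ r) * (‖hG.mk G ξ‖₊ : ℝ≥0∞) ^ 2 :=
    lintegral_congr_ae (hGae.mono fun ξ h => by simp only [h])
  rw [e1, e2, e3]
  exact key
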